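/- arXiv:1905.03913 — 2 statements merged into one kernel-verified Lean document; each statement's English description precedes it below -/
import Mathlib

section
/- Let Λ be a finite index set, let τ_1,…,τ_t > 0 be constants, and for each r = 1,…,t let Z_r ∈ ℝ^Λ be a random vector with i.i.d. standard normal entries, the Z_r mutually independent. If f : ℝ^{|Λ|(t+1)} → ℝ (viewed as a function of t+1 blocks in ℝ^Λ) is PL(2) with constant L, then the function f̃ : ℝ^Λ → ℝ defined by f̃(s) := E[f(τ_1 Z_1, …, τ_t Z_t, s)] is PL(2); moreover its PL(2) constant can be taken to be L(1 + 2|Λ|√(2/π) Σ_{r=1}^t τ_r). -/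
open MeasureTheory ProbabilityTheory
open Real Set Filter

noncomputable section

/-- The standard Gaussian product measure on `ι → ℝ`. -/
def stdGaussian (ι : Type*) [Fintype ι] : Measure (ι → ℝ) :=
  Measure.pi fun _ => gaussianReal 0 1

instance (ι : Type*) [Fintype ι] : IsProbabilityMeasure (stdGaussian ι) := by
  unfold _root_.stdGaussian; infer_instance

section Aux

/-! ### Auxiliary lemmas -/

lemma aux_measurePreserving_eval {ι : Type*} [Fintype ι] [DecidableEq ι] {α : ι → Type*}
    [∀ i, MeasurableSpace (α i)] (μ : ∀ i, Measure (α i)) [∀ i, IsProbabilityMeasure (μ i)]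
    (i : ι) : MeasurePreserving (Function.eval i) (Measure.pi μ) (μ i) := by
  refine ⟨measurable_pi_apply i, ?_⟩
  ext s hs
  rw [Measure.map_apply (measurable_pi_apply i) hs]
  have h : Function.eval i ⁻¹' s = Set.pi Set.univ (Function.update (fun _ => Set.univ) i s) := by
    ext z
    simp only [Function.eval, Set.mem_preimage, Set.mem_pi, Set.mem_univ, forall_true_left]
    constructor
    · intro hz j
      rcases eq_or_ne j i with rfl | hj
      · simpa using hz
      · simp [Function.update_of_ne hj]
    · intro hz; have := hz i; simpa using this
  rw [h, Measure.pi_pi]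
  rw [Finset.prod_eq_single i (fun j _ hj => by simp [Function.update_of_ne hj]) (by simp)]
  simp

lemma aux_gaussianPDFReal01 (x : ℝ) :
    gaussianPDFReal 0 1 x = (√(2 * π))⁻¹ * rexp (-(1/2) * x ^ 2) := by
  simp only [gaussianPDFReal, NNReal.coe_one, mul_one, sub_zero]
  congr 1
  ring_nf

lemma aux_integral_gaussianReal01 (g : ℝ → ℝ) :
    ∫ x, g x ∂(gaussianReal 0 1) = ∫ x, gaussianPDFReal 0 1 x * g x := by
  rw [gaussianReal_of_var_ne_zero 0 one_ne_zero]
  have hd : gaussianPDF 0 1 = fun x => ((gaussianPDFReal 0 1 x).toNNReal : ENNReal) := rfl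
  rw [hd, integral_withDensity_eq_integral_smul
    ((measurable_gaussianPDFReal 0 1).real_toNNReal) g]
  congr 1
  ext x
  rw [NNReal.smul_def, smul_eq_mul, Real.coe_toNNReal _ (gaussianPDFReal_nonneg 0 1 x)]

lemma aux_integrable_gaussianReal01 (g : ℝ → ℝ)
    (h : Integrable (fun x => g x * gaussianPDFReal 0 1 x)) :
    Integrable g (gaussianReal 0 1) := by
  rw [gaussianReal_of_var_ne_zero 0 one_ne_zero]
  rw [integrable_withDensity_iff (measurable_gaussianPDF 0 1)
    (Eventually.of_forall fun x => ENNReal.ofReal_lt_top)]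
  refine h.congr ?_
  refine Eventually.of_forall fun x => ?_
  simp only [gaussianPDF_def]
  rw [ENNReal.toReal_ofReal (gaussianPDFReal_nonneg 0 1 x)]

lemma aux_integrable_abs_gaussian : Integrable (fun x => |x|) (gaussianReal 0 1) := by
  refine aux_integrable_gaussianReal01 _ ?_
  have h := ((integrable_rpow_mul_exp_neg_mul_sq (b := 1/2) (by norm_num) (s := 1)
    (by norm_num)).abs).const_mul (√(2 * π))⁻¹
  refine h.congr (Eventually.of_forall fun x => ?_)
  simp only [Real.rpow_one, abs_mul, abs_of_nonneg (Real.exp_nonneg _)]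
  rw [aux_gaussianPDFReal01]
  ring

lemma aux_integrable_sq_gaussian : Integrable (fun x => x ^ 2) (gaussianReal 0 1) := by
  refine aux_integrable_gaussianReal01 _ ?_
  have h := (integrable_rpow_mul_exp_neg_mul_sq (b := 1/2) (by norm_num) (s := 2)
    (by norm_num)).const_mul (√(2 * π))⁻¹
  refine h.congr (Eventually.of_forall fun x => ?_)
  have h2 : x ^ (2 : ℝ) = x ^ 2 := by
    rw [show (2:ℝ) = ((2:ℕ):ℝ) by norm_num, Real.rpow_natCast]
  simp only [h2]
  rw [aux_gaussianPDFReal01]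
  ring

lemma aux_integral_abs_gaussian : ∫ x, |x| ∂(gaussianReal 0 1) = √(2 / π) := by
  rw [aux_integral_gaussianReal01]
  have hev : ∀ x : ℝ, gaussianPDFReal 0 1 x * |x| =
      (√(2 * π))⁻¹ * (|x| * rexp (-(1/2) * |x| ^ 2)) := by
    intro x
    rw [aux_gaussianPDFReal01, sq_abs]
    ring
  simp_rw [hev]
  rw [integral_const_mul]
  rw [integral_comp_abs (f := fun x => x * rexp (-(1/2) * x ^ 2))]
  have hIoi : ∫ x in Ioi (0:ℝ), x * rexp (-(1/2) * x ^ 2) = 1 := by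
    have := integral_Ioi_of_hasDerivAt_of_tendsto (a := (0:ℝ)) (m := (0:ℝ))
      (f := fun x => -rexp (-(1/2) * x ^ 2)) (f' := fun x => x * rexp (-(1/2) * x ^ 2))
      ?_ ?_ ?_ ?_
    · rw [this]; simp
    · exact (Continuous.continuousWithinAt (by continuity))
    · intro x hx
      have h1 : HasDerivAt (fun x : ℝ => -(1/2) * x ^ 2) (-(1/2) * (2 * x)) x := by
        simpa using (hasDerivAt_pow 2 x).const_mul (-(1/2):ℝ)
      have := (h1.exp).neg
      convert this using 1
      · rfl
      · ring
    · exact (integrable_mul_exp_neg_mul_sq (by norm_num : (0:ℝ) < 1/2)).integrableOn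
    · rw [show (0:ℝ) = -0 by norm_num]
      refine Tendsto.neg ?_
      refine Real.tendsto_exp_atBot.comp ?_
      have h2 : Tendsto (fun x : ℝ => (1/2) * x ^ 2) atTop atTop :=
        (tendsto_pow_atTop two_ne_zero).const_mul_atTop (by norm_num)
      exact (tendsto_neg_atBot_iff.mpr h2).congr (fun x => by ring)
  rw [hIoi]
  have hs2 : √(2 * π) = √2 * √π := Real.sqrt_mul (by norm_num) π
  have hsd : √(2 / π) = √2 / √π := Real.sqrt_div (by norm_num) π
  have h2 : (√2) * √2 = 2 := Real.mul_self_sqrt (by norm_num)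
  have hπ : (0:ℝ) < √π := Real.sqrt_pos.mpr pi_pos
  have h2p : (0:ℝ) < √2 := Real.sqrt_pos.mpr (by norm_num)
  rw [hs2, hsd]
  field_simp
  nlinarith [h2, hπ, h2p]

/-- The block vector `(τ₁ z₁, …, τ_t z_t, x)`. -/
def auxG {Λ : Type*} [Fintype Λ] {t : ℕ} (τ : Fin t → ℝ) (x : EuclideanSpace ℝ Λ)
    (z : Fin t → Λ → ℝ) : EuclideanSpace ℝ (Fin (t + 1) × Λ) :=
  WithLp.toLp 2 (fun rj : Fin (t + 1) × Λ => if h : (rj.1 : ℕ) < t then τ ⟨rj.1, h⟩ * z ⟨rj.1, h⟩ rj.2 else x rj.2)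

/-- The weighted ℓ¹ size of `z`. -/
def auxT {Λ : Type*} [Fintype Λ] {t : ℕ} (τ : Fin t → ℝ) (z : Fin t → Λ → ℝ) : ℝ :=
  ∑ p : Fin t × Λ, τ p.1 * |z p.1 p.2|

/-- The squared ℓ² size of `z`. -/
def auxS {Λ : Type*} [Fintype Λ] {t : ℕ} (z : Fin t → Λ → ℝ) : ℝ :=
  ∑ p : Fin t × Λ, (z p.1 p.2) ^ 2

lemma aux_norm_le_sum_abs {ι : Type*} [Fintype ι] (w : EuclideanSpace ℝ ι) :
    ‖w‖ ≤ ∑ i, |w i| := by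
  rw [EuclideanSpace.norm_eq]
  have h1 : ∑ i, ‖w i‖ ^ 2 ≤ (∑ i, |w i|) ^ 2 := by
    rw [sq (∑ i, |w i|)]
    calc ∑ i, ‖w i‖ ^ 2 = ∑ i, |w i| * |w i| := by simp [Real.norm_eq_abs, sq]
    _ ≤ ∑ i, |w i| * (∑ j, |w j|) :=
        Finset.sum_le_sum fun i _ => mul_le_mul_of_nonneg_left
          (Finset.single_le_sum (fun j _ => abs_nonneg (w j)) (Finset.mem_univ i)) (abs_nonneg _)
    _ = (∑ i, |w i|) * (∑ j, |w j|) := by rw [← Finset.sum_mul]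
  calc √(∑ i, ‖w i‖ ^ 2) ≤ √((∑ i, |w i|) ^ 2) := Real.sqrt_le_sqrt h1
  _ = ∑ i, |w i| := Real.sqrt_sq (Finset.sum_nonneg fun i _ => abs_nonneg _)

lemma auxG_sub_norm {Λ : Type*} [Fintype Λ] {t : ℕ} (τ : Fin t → ℝ)
    (x y : EuclideanSpace ℝ Λ) (z : Fin t → Λ → ℝ) :
    ‖auxG τ x z - auxG τ y z‖ = ‖x - y‖ := by
  rw [EuclideanSpace.norm_eq, EuclideanSpace.norm_eq (x - y)]
  congr 1
  rw [Fintype.sum_prod_type]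
  rw [Finset.sum_eq_single (Fin.last t)]
  · refine Finset.sum_congr rfl fun j _ => ?_
    have ht : ¬ ((Fin.last t : Fin (t+1)) : ℕ) < t := by simp
    simp only [PiLp.sub_apply, auxG, PiLp.toLp_apply, dif_neg ht]
  · intro r _ hr
    have hrt : (r : ℕ) < t := Fin.val_lt_last hr
    refine Finset.sum_eq_zero fun j _ => ?_
    simp only [PiLp.sub_apply, auxG, PiLp.toLp_apply, dif_pos hrt]
    simp
  · intro h; exact absurd (Finset.mem_univ _) h

lemma auxG_norm_le {Λ : Type*} [Fintype Λ] {t : ℕ} (τ : Fin t → ℝ) (hτ : ∀ r, 0 < τ r)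
    (x : EuclideanSpace ℝ Λ) (z : Fin t → Λ → ℝ) :
    ‖auxG τ x z‖ ≤ ‖x‖ + auxT τ z := by
  classical
  set v : EuclideanSpace ℝ (Fin (t + 1) × Λ) :=
    WithLp.toLp 2 (fun rj : Fin (t + 1) × Λ => if h : (rj.1 : ℕ) < t then τ ⟨rj.1, h⟩ * z ⟨rj.1, h⟩ rj.2 else 0) with hv
  set w : EuclideanSpace ℝ (Fin (t + 1) × Λ) :=
    WithLp.toLp 2 (fun rj : Fin (t + 1) × Λ => if h : (rj.1 : ℕ) < t then 0 else x rj.2) with hw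
  have hsum : auxG τ x z = v + w := by
    ext rj
    show auxG τ x z rj = v rj + w rj
    by_cases h : (rj.1 : ℕ) < t
    · simp only [auxG, hv, hw, PiLp.toLp_apply, dif_pos h]; ring
    · simp only [auxG, hv, hw, PiLp.toLp_apply, dif_neg h]; ring
  have hwx : ‖w‖ = ‖x‖ := by
    rw [EuclideanSpace.norm_eq, EuclideanSpace.norm_eq x]
    congr 1
    rw [Fintype.sum_prod_type]
    rw [Finset.sum_eq_single (Fin.last t)]
    · refine Finset.sum_congr rfl fun j _ => ?_
      have ht : ¬ ((Fin.last t : Fin (t+1)) : ℕ) < t := by simp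
      simp only [hw, PiLp.toLp_apply, dif_neg ht]
    · intro r _ hr
      have hrt : (r : ℕ) < t := Fin.val_lt_last hr
      refine Finset.sum_eq_zero fun j _ => ?_
      simp only [hw, PiLp.toLp_apply, dif_pos hrt]
      simp
    · intro h; exact absurd (Finset.mem_univ _) h
  have hvb : ‖v‖ ≤ auxT τ z := by
    refine (aux_norm_le_sum_abs v).trans ?_
    rw [auxT, Fintype.sum_prod_type, Fintype.sum_prod_type, Fin.sum_univ_castSucc]
    have hlast : ∑ j, |v (Fin.last t, j)| = 0 := by
      refine Finset.sum_eq_zero fun j _ => ?_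
      have ht : ¬ ((Fin.last t : Fin (t+1)) : ℕ) < t := by simp
      simp only [hv, PiLp.toLp_apply, dif_neg ht, abs_zero]
    rw [hlast, add_zero]
    refine le_of_eq (Finset.sum_congr rfl fun r _ => ?_)
    refine Finset.sum_congr rfl fun j _ => ?_
    have hrt : ((r.castSucc : Fin (t+1)) : ℕ) < t := by simp [Fin.is_lt]
    have hre : (⟨((r.castSucc : Fin (t+1)) : ℕ), hrt⟩ : Fin t) = r := by
      apply Fin.ext; simp
    simp only [hv, PiLp.toLp_apply, dif_pos hrt, hre, abs_mul, abs_of_pos (hτ r)]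
  calc ‖auxG τ x z‖ = ‖v + w‖ := by rw [hsum]
  _ ≤ ‖v‖ + ‖w‖ := norm_add_le v w
  _ ≤ auxT τ z + ‖x‖ := add_le_add hvb (le_of_eq hwx)
  _ = _ := by ring

lemma auxG_continuous {Λ : Type*} [Fintype Λ] {t : ℕ} (τ : Fin t → ℝ)
    (x : EuclideanSpace ℝ Λ) : Continuous (auxG τ x) := by
  refine (PiLp.continuous_toLp 2 (fun _ : Fin (t + 1) × Λ => ℝ)).comp ?_
  refine continuous_pi fun rj => ?_
  show Continuous fun a : Fin t → Λ → ℝ =>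
    if h : (rj.1 : ℕ) < t then τ ⟨rj.1, h⟩ * a ⟨rj.1, h⟩ rj.2 else x rj.2
  by_cases h : (rj.1 : ℕ) < t
  · simp only [dif_pos h]
    exact continuous_const.mul ((continuous_apply rj.2).comp (continuous_apply (⟨rj.1, h⟩ : Fin t)))
  · simp only [dif_neg h]
    exact continuous_const

lemma auxT_sq_le {Λ : Type*} [Fintype Λ] {t : ℕ} (τ : Fin t → ℝ) (z : Fin t → Λ → ℝ) :
    (auxT τ z) ^ 2 ≤ (∑ p : Fin t × Λ, (τ p.1) ^ 2) * auxS z := by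
  have h := Finset.sum_mul_sq_le_sq_mul_sq Finset.univ (fun p : Fin t × Λ => τ p.1)
    (fun p : Fin t × Λ => |z p.1 p.2|)
  refine h.trans (le_of_eq ?_)
  congr 1
  simp [auxS, sq_abs]

end Aux

/-- **Gaussian expectations of PL(2) functions are PL(2) (Lemma B.4).**  If
`f : (ℝ^Λ)^{t+1} → ℝ` is PL(2) with constant `L`, and `Z₁, …, Z_t` are independent standard
Gaussian vectors in `ℝ^Λ`, then `f̃(s) := E[f(τ₁ Z₁, …, τ_t Z_t, s)]` is PL(2) with constant
`L (1 + 2|Λ| √(2/π) ∑_r τ_r)`. -/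
theorem gaussian_expectation_pl2 (Λ : Type*) [Fintype Λ] (t : ℕ)
    (τ : Fin t → ℝ) (hτ : ∀ r, 0 < τ r)
    (f : EuclideanSpace ℝ (Fin (t + 1) × Λ) → ℝ) (L : ℝ) (hL : 0 < L)
    (hf : ∀ x y : EuclideanSpace ℝ (Fin (t + 1) × Λ),
      |f x - f y| ≤ L * (1 + ‖x‖ + ‖y‖) * ‖x - y‖) :
    ∀ x y : EuclideanSpace ℝ Λ,
      |(∫ z : Fin t → Λ → ℝ,
          f (WithLp.toLp 2 (fun rj : Fin (t + 1) × Λ => if h : (rj.1 : ℕ) < t then τ ⟨rj.1, h⟩ * z ⟨rj.1, h⟩ rj.2 else x rj.2))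
          ∂(Measure.pi fun _ : Fin t => stdGaussian Λ)) -
        (∫ z : Fin t → Λ → ℝ,
          f (WithLp.toLp 2 (fun rj : Fin (t + 1) × Λ => if h : (rj.1 : ℕ) < t then τ ⟨rj.1, h⟩ * z ⟨rj.1, h⟩ rj.2 else y rj.2))
          ∂(Measure.pi fun _ : Fin t => stdGaussian Λ))|
      ≤ (L * (1 + 2 * (Fintype.card Λ : ℝ) * Real.sqrt (2 / Real.pi) * ∑ r, τ r)) *
          (1 + ‖x‖ + ‖y‖) * ‖x - y‖ := by
  classical
  intro x y
  set μ : Measure (Fin t → Λ → ℝ) := Measure.pi fun _ : Fin t => stdGaussian Λ with hμ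
  haveI : IsProbabilityMeasure μ := by rw [hμ]; infer_instance
  show |(∫ z, f (auxG τ x z) ∂μ) - (∫ z, f (auxG τ y z) ∂μ)| ≤ _
  -- continuity of `f`
  have hfc : Continuous f := by
    rw [continuous_iff_continuousAt]
    intro w
    rw [ContinuousAt, ← tendsto_sub_nhds_zero_iff]
    have hb : Tendsto (fun u : EuclideanSpace ℝ (Fin (t+1) × Λ) =>
        L * (1 + ‖u‖ + ‖w‖) * ‖u - w‖) (nhds w) (nhds 0) := by
      have hc : Continuous fun u : EuclideanSpace ℝ (Fin (t+1) × Λ) =>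
          L * (1 + ‖u‖ + ‖w‖) * ‖u - w‖ := by fun_prop
      simpa using hc.tendsto w
    refine squeeze_zero_norm (fun u => ?_) hb
    rw [Real.norm_eq_abs]
    exact hf u w
  -- measure-preserving coordinate evaluations
  have hMP : ∀ (r : Fin t) (j : Λ),
      MeasurePreserving (fun z : Fin t → Λ → ℝ => z r j) μ (gaussianReal 0 1) := by
    intro r j
    have h1 : MeasurePreserving (Function.eval r) μ (stdGaussian Λ) :=
      aux_measurePreserving_eval _ r
    have h2 : MeasurePreserving (Function.eval j) (stdGaussian Λ) (gaussianReal 0 1) :=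
      aux_measurePreserving_eval (fun _ : Λ => gaussianReal 0 1) j
    exact h2.comp h1
  have hintabs : ∀ (r : Fin t) (j : Λ), Integrable (fun z : Fin t → Λ → ℝ => |z r j|) μ := by
    intro r j
    exact ((hMP r j).integrable_comp
      (continuous_abs.aestronglyMeasurable)).mpr aux_integrable_abs_gaussian
  have hintsq : ∀ (r : Fin t) (j : Λ), Integrable (fun z : Fin t → Λ → ℝ => (z r j) ^ 2) μ := by
    intro r j
    exact ((hMP r j).integrable_comp
      ((continuous_pow 2).aestronglyMeasurable)).mpr aux_integrable_sq_gaussian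
  have hvalabs : ∀ (r : Fin t) (j : Λ), ∫ z, |z r j| ∂μ = √(2 / π) := by
    intro r j
    have h := integral_map (φ := fun z : Fin t → Λ → ℝ => z r j) (f := fun u : ℝ => |u|)
      ((hMP r j).measurable.aemeasurable)
      (by rw [(hMP r j).map_eq]; exact continuous_abs.aestronglyMeasurable)
    rw [(hMP r j).map_eq] at h
    rw [← h, aux_integral_abs_gaussian]
  -- integrability of T and S
  have hTint : Integrable (auxT τ) μ := by
    refine integrable_finset_sum _ fun p _ => ?_
    exact (hintabs p.1 p.2).const_mul _
  have hSint : Integrable (auxS (Λ := Λ) (t := t)) μ := by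
    refine integrable_finset_sum _ fun p _ => ?_
    exact hintsq p.1 p.2
  have hT0 : ∀ z : Fin t → Λ → ℝ, 0 ≤ auxT τ z := by
    intro z
    unfold auxT
    exact Finset.sum_nonneg fun p _ => mul_nonneg (hτ p.1).le (abs_nonneg _)
  have hTval : ∫ z, auxT τ z ∂μ = (Fintype.card Λ : ℝ) * √(2 / π) * ∑ r, τ r := by
    unfold auxT
    rw [integral_finset_sum _ fun p _ => (hintabs p.1 p.2).const_mul _]
    have hterm : ∀ p : Fin t × Λ, ∫ z, τ p.1 * |z p.1 p.2| ∂μ = τ p.1 * √(2 / π) := by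
      intro p
      rw [integral_const_mul, hvalabs p.1 p.2]
    simp_rw [hterm]
    rw [Fintype.sum_prod_type]
    simp only [Finset.sum_const, Finset.card_univ, nsmul_eq_mul]
    rw [Finset.mul_sum]
    exact Finset.sum_congr rfl fun r _ => by ring
  -- pointwise bound for f
  have hfb : ∀ w : EuclideanSpace ℝ (Fin (t+1) × Λ), |f w| ≤ |f 0| + L * (1 + ‖w‖) * ‖w‖ := by
    intro w
    have h := hf w 0
    simp only [norm_zero, sub_zero, add_zero] at h
    calc |f w| = |f 0 + (f w - f 0)| := by ring_nf
    _ ≤ |f 0| + |f w - f 0| := abs_add_le _ _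
    _ ≤ _ := by linarith
  -- integrability of the integrands
  set K : ℝ := ∑ p : Fin t × Λ, (τ p.1) ^ 2 with hK
  have hIg : ∀ u : EuclideanSpace ℝ Λ, Integrable (fun z => f (auxG τ u z)) μ := by
    intro u
    have hbint : Integrable (fun z =>
        (|f 0| + L * (‖u‖ + ‖u‖ ^ 2) + (L * (1 + 2 * ‖u‖)) * auxT τ z) + (L * K) * auxS z) μ :=
      (((integrable_const _).add (hTint.const_mul _)).add (hSint.const_mul _))
    refine hbint.mono' (hfc.comp (auxG_continuous τ u)).aestronglyMeasurable ?_
    refine Eventually.of_forall fun z => ?_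
    rw [Real.norm_eq_abs]
    have h1 := hfb (auxG τ u z)
    have h2 := auxG_norm_le τ hτ u z
    have h3 := auxT_sq_le τ z
    rw [← hK] at h3
    have h4 := hT0 z
    have h5 : (0:ℝ) ≤ ‖u‖ := norm_nonneg u
    have h6 : (0:ℝ) ≤ ‖auxG τ u z‖ := norm_nonneg _
    nlinarith [mul_le_mul_of_nonneg_left h3 hL.le,
      mul_nonneg (mul_nonneg hL.le (sub_nonneg.mpr h2))
        (by linarith : (0:ℝ) ≤ 1 + ‖u‖ + auxT τ z + ‖auxG τ u z‖)]
  have hIx := hIg x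
  have hIy := hIg y
  -- pointwise difference bound
  have hpt : ∀ z, |f (auxG τ x z) - f (auxG τ y z)| ≤
      (L * ‖x - y‖) * ((1 + ‖x‖ + ‖y‖) + 2 * auxT τ z) := by
    intro z
    have h := hf (auxG τ x z) (auxG τ y z)
    rw [auxG_sub_norm] at h
    have h2 := auxG_norm_le τ hτ x z
    have h3 := auxG_norm_le τ hτ y z
    have h4 := hT0 z
    have h5 : (0:ℝ) ≤ ‖x - y‖ := norm_nonneg _
    have h6 : 1 + ‖auxG τ x z‖ + ‖auxG τ y z‖ ≤ (1 + ‖x‖ + ‖y‖) + 2 * auxT τ z := by linarith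
    calc |f (auxG τ x z) - f (auxG τ y z)|
        ≤ L * (1 + ‖auxG τ x z‖ + ‖auxG τ y z‖) * ‖x - y‖ := h
    _ ≤ L * ((1 + ‖x‖ + ‖y‖) + 2 * auxT τ z) * ‖x - y‖ :=
        mul_le_mul_of_nonneg_right (mul_le_mul_of_nonneg_left h6 hL.le) h5
    _ = (L * ‖x - y‖) * ((1 + ‖x‖ + ‖y‖) + 2 * auxT τ z) := by ring
  have hbint2 : Integrable (fun z =>
      (L * ‖x - y‖) * ((1 + ‖x‖ + ‖y‖) + 2 * auxT τ z)) μ :=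
    (((integrable_const _).add (hTint.const_mul 2)).const_mul _)
  have hsqrt : (0:ℝ) ≤ √(2 / π) := Real.sqrt_nonneg _
  have hτsum : (0:ℝ) ≤ ∑ r, τ r := Finset.sum_nonneg fun r _ => (hτ r).le
  have hcard : (0:ℝ) ≤ (Fintype.card Λ : ℝ) := Nat.cast_nonneg _
  calc |(∫ z, f (auxG τ x z) ∂μ) - (∫ z, f (auxG τ y z) ∂μ)|
      = |∫ z, (f (auxG τ x z) - f (auxG τ y z)) ∂μ| := by rw [integral_sub hIx hIy]
  _ ≤ ∫ z, |f (auxG τ x z) - f (auxG τ y z)| ∂μ := by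
      simpa [Real.norm_eq_abs] using
        norm_integral_le_integral_norm (μ := μ) (fun z => f (auxG τ x z) - f (auxG τ y z))
  _ ≤ ∫ z, (L * ‖x - y‖) * ((1 + ‖x‖ + ‖y‖) + 2 * auxT τ z) ∂μ :=
      integral_mono (hIx.sub hIy).abs hbint2 hpt
  _ = (L * ‖x - y‖) * ((1 + ‖x‖ + ‖y‖) +
        2 * ((Fintype.card Λ : ℝ) * √(2 / π) * ∑ r, τ r)) := by
      rw [integral_const_mul]
      congr 1
      rw [integral_add (integrable_const _) (hTint.const_mul 2)]
      rw [integral_const, integral_const_mul, hTval]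
      simp [measure_univ]
  _ ≤ (L * (1 + 2 * (Fintype.card Λ : ℝ) * √(2 / π) * ∑ r, τ r)) *
        (1 + ‖x‖ + ‖y‖) * ‖x - y‖ := by
      have hM : (0:ℝ) ≤ (Fintype.card Λ : ℝ) * √(2 / π) * ∑ r, τ r :=
        mul_nonneg (mul_nonneg hcard hsqrt) hτsum
      have hd : (0:ℝ) ≤ ‖x - y‖ := norm_nonneg _
      have hc : (1:ℝ) ≤ 1 + ‖x‖ + ‖y‖ := by
        have := norm_nonneg x; have := norm_nonneg y; linarith
      nlinarith [mul_nonneg (mul_nonneg (mul_nonneg hL.le hM) hd) (sub_nonneg.mpr hc)]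


end
end

section
/- Let Γ = [N]^p (p ∈ {1,2,3}), Λ = [2k+1]^p with 2k+1 ≤ N, and for i ∈ Γ let Λ_i be Λ translated to be centered at i. Let t ≥ 1 and let R ∈ ℝ^{t×t} be a correlation matrix with unit diagonal. Let {(Z_i^1, …, Z_i^t)}_{i∈Γ} be i.i.d. across sites i ∈ Γ, each distributed as a centered jointly Gaussian vector in ℝ^t with covariance matrix R (so each Z_i^r ∼ N(0,1)). For each i ∈ Γ define Y_i := (Z^1_{Λ_i∩Γ}, …, Z^t_{Λ_i∩Γ}), the collection of the t Gaussian fields restricted to the window Λ_i ∩ Γ, and let f_i : ℝ^{|Λ_i∩Γ|·t} → ℝ be PL(2) with constant L_i. Then for every ε ∈ (0,1) there exist constants K, κ > 0 (depending on t, |Λ|, and max_i L_i, but not on |Γ| or ε) such that P( | (1/|Γ|) Σ_{i∈Γ} ( f_i(Y_i) − E[f_i(Y_i)] ) | ≥ ε ) ≤ K·e^{−κ |Γ| ε²}. -/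
open MeasureTheory ProbabilityTheory

noncomputable section

/-! ### Auxiliary elementary inequalities -/

lemma aux_sq_le_four_mul_exp {v : ℝ} (hv : 0 ≤ v) : v^2 ≤ 4 * Real.exp v := by
  have h1 : v/2 ≤ Real.exp (v/2) := by
    have := Real.add_one_le_exp (v/2); linarith
  have h2 : (v/2)^2 ≤ (Real.exp (v/2))^2 := by
    apply pow_le_pow_left₀ (by linarith) h1
  have h3 : (Real.exp (v/2))^2 = Real.exp v := by
    rw [sq, ← Real.exp_add]; ring_nf
  nlinarith [Real.exp_pos v]

lemma aux_exp_le (u : ℝ) : Real.exp u ≤ 1 + u + u^2 * Real.exp |u| := by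
  have base : ∀ w : ℝ, 0 ≤ w → Real.exp w ≤ 1 + w + w^2 * Real.exp w := by
    intro w hw
    rcases le_or_gt 1 w with h1 | h1
    · have hw2 : (1:ℝ) * Real.exp w ≤ w^2 * Real.exp w :=
        mul_le_mul_of_nonneg_right (by nlinarith) (Real.exp_pos w).le
      linarith
    · have h2 : 1 - w ≤ Real.exp (-w) := by have := Real.add_one_le_exp (-w); linarith
      have h3 : Real.exp w * (1 - w) ≤ 1 := by
        calc Real.exp w * (1 - w) ≤ Real.exp w * Real.exp (-w) := by
              apply mul_le_mul_of_nonneg_left h2 (Real.exp_pos w).le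
          _ = 1 := by rw [← Real.exp_add]; simp
      nlinarith [Real.exp_pos w]
  rcases le_or_gt 0 u with hu | hu
  · rw [abs_of_nonneg hu]; exact base u hu
  · have hs : Real.exp u - Real.exp (-u) ≤ 2 * u := by
      have h := Real.self_lt_sinh_iff.mpr (by linarith : (0:ℝ) < -u)
      rw [Real.sinh_eq] at h
      simp only [neg_neg] at h
      linarith
    have hb := base (-u) (by linarith)
    rw [abs_of_neg hu]
    nlinarith

lemma aux_exp_quarter : Real.exp (1/4) ≤ Real.sqrt 2 := by
  have h4 : Real.exp (1/4)^4 = Real.exp 1 := by rw [← Real.exp_nat_mul]; norm_num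
  have hs : Real.sqrt 2 ^ 4 = 4 := by
    have h : Real.sqrt 2 ^ 4 = (Real.sqrt 2 ^ 2)^2 := by ring
    rw [h, Real.sq_sqrt (by norm_num : (0:ℝ) ≤ 2)]; norm_num
  by_contra hcon
  push_neg at hcon
  have hlt : Real.sqrt 2 ^ 4 < Real.exp (1/4)^4 :=
    pow_lt_pow_left₀ hcon (Real.sqrt_nonneg 2) (by norm_num)
  rw [hs, h4] at hlt
  have he : Real.exp 1 < 4 := lt_trans Real.exp_one_lt_d9 (by norm_num)
  linarith

/-! ### Sub-exponential mgf bound -/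

lemma aux_mgf_le {Ω : Type*} [MeasurableSpace Ω] {μ : Measure Ω} [IsProbabilityMeasure μ]
    {X : Ω → ℝ} (hXm : Measurable X) {b : ℝ} (hb : 1 ≤ b)
    (hint : Integrable (fun ω => Real.exp (2*|X ω|/b)) μ)
    (hE2 : ∫ ω, Real.exp (2*|X ω|/b) ∂μ ≤ 2)
    (hXi : Integrable X μ) (hcent : ∫ ω, X ω ∂μ = 0) {l : ℝ} (hl : |l| ≤ 1/b) :
    Integrable (fun ω => Real.exp (l * X ω)) μ ∧
      ∫ ω, Real.exp (l * X ω) ∂μ ≤ Real.exp (8*b^2*l^2) := by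
  have hb0 : 0 < b := by linarith
  have hpt : ∀ ω, Real.exp (l * X ω) ≤ 1 + l * X ω + 4*b^2*l^2 * Real.exp (2*|X ω|/b) := by
    intro ω
    have h1 := aux_exp_le (l * X ω)
    have habs : |l * X ω| ≤ |X ω| / b := by
      rw [abs_mul]
      calc |l| * |X ω| ≤ (1/b) * |X ω| := by
            apply mul_le_mul_of_nonneg_right hl (abs_nonneg _)
        _ = |X ω| / b := by ring
    have hexp : Real.exp |l * X ω| ≤ Real.exp (|X ω|/b) := Real.exp_le_exp.mpr habs
    have hsq : (X ω)^2 ≤ 4*b^2 * Real.exp (|X ω|/b) := by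
      have h4 := aux_sq_le_four_mul_exp (v := |X ω|/b) (by positivity)
      have he : (|X ω|/b)^2 = (X ω)^2 / b^2 := by rw [div_pow, sq_abs]
      rw [he] at h4
      have hb2 : (0:ℝ) < b^2 := by positivity
      calc (X ω)^2 = ((X ω)^2 / b^2) * b^2 := by field_simp
        _ ≤ (4 * Real.exp (|X ω|/b)) * b^2 := by
            apply mul_le_mul_of_nonneg_right h4 hb2.le
        _ = 4*b^2 * Real.exp (|X ω|/b) := by ring
    have h2 : (l * X ω)^2 * Real.exp |l * X ω| ≤ 4*b^2*l^2 * Real.exp (2*|X ω|/b) := by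
      have e1 : (l * X ω)^2 = l^2 * (X ω)^2 := by ring
      have e2 : Real.exp (2*|X ω|/b) = Real.exp (|X ω|/b) * Real.exp (|X ω|/b) := by
        rw [← Real.exp_add]; ring_nf
      rw [e1, e2]
      calc l^2 * (X ω)^2 * Real.exp |l * X ω|
          ≤ l^2 * (4*b^2 * Real.exp (|X ω|/b)) * Real.exp (|X ω|/b) := by
            apply mul_le_mul (mul_le_mul_of_nonneg_left hsq (sq_nonneg l)) hexp
              (Real.exp_pos _).le (by positivity)
        _ = 4*b^2*l^2 * (Real.exp (|X ω|/b) * Real.exp (|X ω|/b)) := by ring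
    linarith
  have hRHSint : Integrable (fun ω => 1 + l * X ω + 4*b^2*l^2 * Real.exp (2*|X ω|/b)) μ :=
    ((integrable_const 1).add (hXi.const_mul l)).add (hint.const_mul _)
  have hInt : Integrable (fun ω => Real.exp (l * X ω)) μ := by
    refine hRHSint.mono' ((hXm.const_mul l).exp.aestronglyMeasurable) ?_
    filter_upwards with ω
    rw [Real.norm_eq_abs, abs_of_pos (Real.exp_pos _)]
    exact hpt ω
  refine ⟨hInt, ?_⟩
  have h5 : ∫ ω, Real.exp (l * X ω) ∂μ
      ≤ ∫ ω, (1 + l * X ω + 4*b^2*l^2 * Real.exp (2*|X ω|/b)) ∂μ :=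
    integral_mono hInt hRHSint hpt
  have h6 : ∫ ω, (1 + l * X ω + 4*b^2*l^2 * Real.exp (2*|X ω|/b)) ∂μ
      = 1 + l * ∫ ω, X ω ∂μ + 4*b^2*l^2 * ∫ ω, Real.exp (2*|X ω|/b) ∂μ := by
    have i1 : Integrable (fun ω => 1 + l * X ω) μ := (integrable_const 1).add (hXi.const_mul l)
    have i2 : Integrable (fun ω => 4*b^2*l^2 * Real.exp (2*|X ω|/b)) μ := hint.const_mul _
    rw [integral_add i1 i2, integral_add (integrable_const 1) (hXi.const_mul l),
      integral_const_mul, integral_const_mul, integral_const]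
    simp
  rw [h6, hcent] at h5
  have h7 : 1 + l * 0 + 4*b^2*l^2 * ∫ ω, Real.exp (2*|X ω|/b) ∂μ ≤ 1 + 8*b^2*l^2 := by
    have h := mul_le_mul_of_nonneg_left hE2 (by positivity : (0:ℝ) ≤ 4*b^2*l^2)
    linarith
  have h8 : (1:ℝ) + 8*b^2*l^2 ≤ Real.exp (8*b^2*l^2) := by
    have := Real.add_one_le_exp (8*b^2*l^2); linarith
  linarith

/-! ### Independence of functions of disjoint blocks of coordinates -/

/-- restriction of a configuration to a window. -/
def resSet {A : Type*} {Ω : Type*} (S : Set A) (z : A → Ω) : S → Ω := fun a => z a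

lemma measurable_resSet {A : Type*} {Ω : Type*} [MeasurableSpace Ω] (S : Set A) :
    Measurable (resSet (Ω := Ω) S) :=
  measurable_pi_lambda _ fun _ => measurable_pi_apply _

lemma iIndepFun_resSet {A : Type*} [Fintype A] {Ω : Type*} [MeasurableSpace Ω]
    {ι : Type*} (ν : Measure Ω) [IsProbabilityMeasure ν] (z₀ : Ω)
    (S : ι → Set A) (hS : Pairwise (Function.onFun Disjoint S)) :
    iIndepFun (fun c => resSet (S c))
      (Measure.pi fun _ : A => ν) := by
  classical
  rw [iIndepFun_iff_measure_inter_preimage_eq_mul]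
  intro T sets hsets
  induction T using Finset.induction_on with
  | empty => simp
  | @insert c₀ T' hc₀ ih =>
    have hsets' : ∀ c ∈ T', MeasurableSet (sets c) := fun c hc =>
      hsets c (Finset.mem_insert_of_mem hc)
    have hB0 : MeasurableSet (sets c₀) := hsets c₀ (Finset.mem_insert_self _ _)
    set p : A → Prop := fun a => a ∈ S c₀ with hp
    set e := MeasurableEquiv.piEquivPiSubtypeProd (fun _ : A => Ω) p with he
    have hmp := measurePreserving_piEquivPiSubtypeProd (fun _ : A => ν) p
    set μ : Measure (A → Ω) := Measure.pi fun _ : A => ν with hμ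
    set π₁ : Measure ({a // p a} → Ω) := Measure.pi fun _ => ν with hπ₁
    set π₂ : Measure ({a // ¬ p a} → Ω) := Measure.pi fun _ => ν with hπ₂
    set D : Set (A → Ω) := ⋂ c ∈ T', resSet (S c) ⁻¹' sets c with hD
    have hDmeas : MeasurableSet D := by
      apply MeasurableSet.biInter (Finset.countable_toSet T')
      intro c hc
      exact (measurable_resSet (S c)) (hsets' c hc)
    set D₂ : Set ({a // ¬ p a} → Ω) :=
      (fun w : {a // ¬ p a} → Ω => e.symm ((fun _ => z₀), w)) ⁻¹' D with hD₂
    have hD₂meas : MeasurableSet D₂ :=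
      (e.symm.measurable.comp (measurable_const.prodMk measurable_id)) hDmeas
    have hdisj : ∀ c, c ∈ T' → ∀ a : A, a ∈ S c₀ → a ∈ S c → False := by
      intro c hc a h0 h1
      have hne : c₀ ≠ c := fun hcc => hc₀ (hcc ▸ hc)
      exact Set.disjoint_left.mp (hS hne) h0 h1
    -- key: membership in D only depends on the non-p coordinates
    have key : ∀ (v : {a // p a} → Ω) (w : {a // ¬ p a} → Ω) (c) (hc : c ∈ T'),
        resSet (S c) (e.symm (v, w)) =
          fun a : S c => w ⟨a.1, fun h => hdisj c hc a.1 h a.2⟩ := by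
      intro v w c hc
      funext a
      have ha : ¬ p a.1 := fun h => hdisj c hc a.1 h a.2
      show (e.symm (v, w)) a.1 = _
      rw [he]
      simp only [MeasurableEquiv.piEquivPiSubtypeProd, MeasurableEquiv.symm_mk,
        MeasurableEquiv.coe_mk, Equiv.piEquivPiSubtypeProd_symm_apply]
      rw [dif_neg ha]
    have hmemD : ∀ z : A → Ω, z ∈ D ↔ (e z).2 ∈ D₂ := by
      intro z
      have hz : ∀ c ∈ T', resSet (S c) (e.symm ((fun _ => z₀), (e z).2)) = resSet (S c) z := by
        intro c hc
        rw [key _ _ c hc]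
        funext a
        show (e z).2 ⟨a.1, _⟩ = z a.1
        rfl
      simp only [hD₂, Set.mem_preimage, hD, Set.mem_iInter]
      constructor
      · intro h c hc
        rw [hz c hc]
        exact h c hc
      · intro h c hc
        have h2 := h c hc
        rw [hz c hc] at h2
        exact h2
    have hres0 : resSet (S c₀) ⁻¹' sets c₀ = e ⁻¹' (sets c₀ ×ˢ Set.univ) := by
      ext z
      simp only [Set.mem_preimage, Set.mem_prod, Set.mem_univ, and_true]
      rfl
    have hDeq : D = e ⁻¹' (Set.univ ×ˢ D₂) := by
      ext z
      simp only [Set.mem_preimage, Set.mem_prod, Set.mem_univ, true_and]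
      exact hmemD z
    have hmeas_e : ∀ {s : Set ({a // p a} → Ω) } {u : Set ({a // ¬ p a} → Ω)},
        MeasurableSet s → MeasurableSet u → μ (e ⁻¹' (s ×ˢ u)) = π₁ s * π₂ u := by
      intro s u hs hu
      rw [hmp.measure_preimage (hs.prod hu).nullMeasurableSet]
      exact Measure.prod_prod s u
    have hsplit : μ (resSet (S c₀) ⁻¹' sets c₀ ∩ D) = π₁ (sets c₀) * π₂ D₂ := by
      rw [hres0, hDeq, ← Set.preimage_inter, Set.prod_inter_prod, Set.inter_univ,
        Set.univ_inter]
      exact hmeas_e hB0 hD₂meas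
    have h1 : μ (resSet (S c₀) ⁻¹' sets c₀) = π₁ (sets c₀) := by
      rw [hres0, hmeas_e hB0 MeasurableSet.univ, measure_univ, mul_one]
    have h2 : μ D = π₂ D₂ := by
      rw [hDeq, hmeas_e MeasurableSet.univ hD₂meas, measure_univ, one_mul]
    rw [Finset.set_biInter_insert, Finset.prod_insert hc₀, ← ih hsets', ← hD]
    rw [hsplit, h1, h2]

/-! ### Gaussian facts -/

lemma aux_map_eval_pi {A : Type*} [Fintype A] {Ω : Type*} [MeasurableSpace Ω]
    (ν : Measure Ω) [IsProbabilityMeasure ν] (a₀ : A) :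
    Measure.map (fun z : A → Ω => z a₀) (Measure.pi fun _ => ν) = ν := by
  classical
  ext s hs
  rw [Measure.map_apply (measurable_pi_apply a₀) hs]
  have h1 : (fun z : A → Ω => z a₀) ⁻¹' s
      = Set.pi Set.univ (Function.update (fun _ => Set.univ) a₀ s) := Set.eval_preimage
  rw [h1, Measure.pi_pi]
  rw [Finset.prod_eq_single a₀ (fun b _ hb => by
    rw [Function.update_of_ne hb]; exact measure_univ) (fun h => absurd (Finset.mem_univ a₀) h)]
  rw [Function.update_self]

lemma aux_gauss_exp_sq {c : ℝ} (hc0 : 0 ≤ c) (hc : c ≤ 1/4) :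
    Integrable (fun x => Real.exp (c*x^2)) (gaussianReal 0 1) ∧
    ∫ x, Real.exp (c*x^2) ∂(gaussianReal 0 1) ≤ Real.sqrt 2 := by
  have h1 : (1:NNReal) ≠ 0 := one_ne_zero
  have hb : (0:ℝ) < 1/2 - c := by linarith
  have hpdfmul : ∀ x : ℝ, gaussianPDFReal 0 1 x * Real.exp (c*x^2)
      = (Real.sqrt (2*Real.pi))⁻¹ * Real.exp (-(1/2 - c)*x^2) := by
    intro x
    rw [gaussianPDFReal]
    push_cast
    rw [mul_assoc, ← Real.exp_add]
    ring_nf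
  rw [gaussianReal_of_var_ne_zero 0 h1]
  have hInt : Integrable (fun x => Real.exp (c*x^2))
      (MeasureTheory.volume.withDensity (gaussianPDF 0 1)) := by
    rw [integrable_withDensity_iff (measurable_gaussianPDF 0 1)
      (ae_of_all _ fun x => ENNReal.ofReal_lt_top)]
    have h : (fun x : ℝ => Real.exp (c*x^2) * (gaussianPDF 0 1 x).toReal)
        = fun x => (Real.sqrt (2*Real.pi))⁻¹ * Real.exp (-(1/2 - c)*x^2) := by
      funext x
      rw [gaussianPDF, ENNReal.toReal_ofReal (gaussianPDFReal_nonneg 0 1 x), mul_comm,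
        hpdfmul x]
    rw [h]
    exact (integrable_exp_neg_mul_sq hb).const_mul _
  refine ⟨hInt, ?_⟩
  have hwd : MeasureTheory.volume.withDensity (gaussianPDF 0 1)
      = MeasureTheory.volume.withDensity
        (fun x => ((gaussianPDFReal 0 1 x).toNNReal : ENNReal)) := rfl
  rw [hwd, integral_withDensity_eq_integral_smul
    (measurable_gaussianPDFReal 0 1).real_toNNReal]
  have heq : (fun x : ℝ => (Real.toNNReal (gaussianPDFReal 0 1 x)) • Real.exp (c*x^2))
      = fun x => (Real.sqrt (2*Real.pi))⁻¹ * Real.exp (-(1/2 - c)*x^2) := by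
    funext x
    rw [NNReal.smul_def, Real.coe_toNNReal _ (gaussianPDFReal_nonneg 0 1 x)]
    exact hpdfmul x
  rw [heq, integral_const_mul, integral_gaussian]
  have hππ : (0:ℝ) < Real.pi := Real.pi_pos
  have hs1 : Real.sqrt (Real.pi / (1/2 - c)) ≤ 2 * Real.sqrt Real.pi := by
    have hπ4 : Real.pi / (1/2 - c) ≤ 4 * Real.pi := by
      rw [div_le_iff₀ hb]; nlinarith
    calc Real.sqrt (Real.pi / (1/2 - c)) ≤ Real.sqrt (4*Real.pi) := Real.sqrt_le_sqrt hπ4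
      _ = 2 * Real.sqrt Real.pi := by
          rw [Real.sqrt_mul (by norm_num : (0:ℝ) ≤ 4)]
          have h4 : Real.sqrt 4 = 2 := by
            rw [show (4:ℝ) = 2^2 by norm_num, Real.sqrt_sq (by norm_num : (0:ℝ) ≤ 2)]
          rw [h4]
  have hs2 : Real.sqrt (2*Real.pi) = Real.sqrt 2 * Real.sqrt Real.pi :=
    Real.sqrt_mul (by norm_num) Real.pi
  have hsπ : (0:ℝ) < Real.sqrt Real.pi := Real.sqrt_pos.mpr hππ
  have hs2' : (0:ℝ) < Real.sqrt 2 := Real.sqrt_pos.mpr (by norm_num)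
  calc (Real.sqrt (2*Real.pi))⁻¹ * Real.sqrt (Real.pi / (1/2 - c))
      ≤ (Real.sqrt (2*Real.pi))⁻¹ * (2 * Real.sqrt Real.pi) := by
        apply mul_le_mul_of_nonneg_left hs1
        positivity
    _ = Real.sqrt 2 := by
        rw [hs2]
        have h22 : Real.sqrt 2 * Real.sqrt 2 = 2 := Real.mul_self_sqrt (by norm_num)
        field_simp
        nlinarith [hsπ, hs2']

/-- The lattice `Γ = [N]^p`. -/
abbrev Idx (p N : ℕ) := Fin p → Fin N

/-- The window shape `Λ = [2k+1]^p`. -/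
abbrev Win (p k : ℕ) := Fin p → Fin (2 * k + 1)

/-- The absolute lattice position of window coordinate `j` of the window `Λ_i` centered at
`i`, when it lies inside `Γ`; `none` when it falls outside `Γ`. -/
def winIdx? (p N k : ℕ) (i : Idx p N) (j : Win p k) : Option (Idx p N) :=
  if h : ∀ c, 0 ≤ (i c : ℤ) + (j c : ℤ) - (k : ℤ) ∧ (i c : ℤ) + (j c : ℤ) - (k : ℤ) < (N : ℤ)
  then some (fun c => ⟨((i c : ℤ) + (j c : ℤ) - (k : ℤ)).toNat, by
    obtain ⟨h1, h2⟩ := h c; omega⟩)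
  else none

/-- The window data `Y_i = (Z¹_{Λ_i∩Γ}, …, Zᵗ_{Λ_i∩Γ})` extracted from the collection of
fields `z : Γ → ℝᵗ`. -/
def winData (p N k t : ℕ) (z : Idx p N → Fin t → ℝ) (i : Idx p N) :
    {j : Win p k // (winIdx? p N k i j).isSome} × Fin t → ℝ :=
  fun jr => z ((winIdx? p N k i jr.1.val).get jr.1.prop) jr.2

/-! ### Window combinatorics -/

lemma winIdx?_get_spec (p N k : ℕ) (i : Idx p N) (j : Win p k)
    (h : (winIdx? p N k i j).isSome) (c : Fin p) :
    (((winIdx? p N k i j).get h) c : ℤ) = (i c : ℤ) + (j c : ℤ) - (k : ℤ) := by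
  by_cases hcond : ∀ c, 0 ≤ (i c : ℤ) + (j c : ℤ) - (k : ℤ) ∧
      (i c : ℤ) + (j c : ℤ) - (k : ℤ) < (N : ℤ)
  · have hy : (winIdx? p N k i j).get h = fun c => (⟨((i c : ℤ) + (j c : ℤ) - (k:ℤ)).toNat, by
        obtain ⟨h1, h2⟩ := hcond c; omega⟩ : Fin N) := by
      apply Option.some_injective
      rw [Option.some_get]
      show winIdx? p N k i j = _
      rw [winIdx?, dif_pos hcond]
    rw [hy]
    show ((((i c : ℤ) + (j c : ℤ) - (k : ℤ)).toNat : ℕ) : ℤ) = _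
    rw [Int.toNat_of_nonneg (hcond c).1]
  · exfalso
    rw [winIdx?] at h
    rw [dif_neg hcond] at h
    simp at h

/-- The set of absolute positions covered by the window centered at `i`. -/
def winSet (p N k : ℕ) (i : Idx p N) : Set (Idx p N) :=
  Set.range (fun jr : {j : Win p k // (winIdx? p N k i j).isSome} =>
    (winIdx? p N k i jr.val).get jr.prop)

lemma winSet_mem_bound {p N k : ℕ} {i x : Idx p N} (hx : x ∈ winSet p N k i) (c : Fin p) :
    |(x c : ℤ) - (i c : ℤ)| ≤ (k : ℤ) := by
  obtain ⟨j, rfl⟩ := hx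
  have hspec := winIdx?_get_spec p N k i j.val j.prop c
  rw [hspec]
  have hj : (j.val c : ℤ) ≤ 2*k := by
    have := (j.val c).isLt; omega
  have hj0 : (0:ℤ) ≤ (j.val c : ℤ) := Int.ofNat_nonneg _
  rw [abs_le]
  omega

lemma winSet_disjoint {p N k : ℕ} {i i' : Idx p N}
    (hmod : ∀ c, (i c : ℕ) % (2*k+1) = (i' c : ℕ) % (2*k+1)) (hne : i ≠ i') :
    Disjoint (winSet p N k i) (winSet p N k i') := by
  rw [Set.disjoint_left]
  rintro x hx hx'
  apply hne
  funext c
  have h1 := winSet_mem_bound hx c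
  have h2 := winSet_mem_bound hx' c
  have h3 := hmod c
  rw [abs_le] at h1 h2
  have hdvd : ((2*k+1 : ℕ) : ℤ) ∣ ((i' c : ℤ) - (i c : ℤ)) := by
    have hmodeq : (i c : ℕ) ≡ (i' c : ℕ) [MOD 2*k+1] := h3
    exact_mod_cast hmodeq.dvd
  have habs : |(i' c : ℤ) - (i c : ℤ)| < ((2*k+1 : ℕ) : ℤ) := by
    rw [abs_lt]; push_cast; omega
  have hzero : (i' c : ℤ) - (i c : ℤ) = 0 := Int.eq_zero_of_abs_lt_dvd hdvd habs
  have hval : (i c : ℕ) = (i' c : ℕ) := by omega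
  exact Fin.ext hval

set_option maxHeartbeats 2000000 in
/-- **Concentration of PL(2) functions of overlapping windows of i.i.d. jointly Gaussian
fields (Lemma D.4).**  Let the per-site vectors `(Z_i¹,…,Z_iᵗ)` be i.i.d. across sites
`i ∈ Γ = [N]^p`, centered jointly Gaussian with correlation matrix `R` (unit diagonal).  If
each `f_i` is PL(2) with constant at most `L`, then with `K, κ > 0` depending only on
`t, |Λ|, L` (not on `|Γ|` or `ε`),
`P(|Γ|⁻¹ |∑_i (f_i(Y_i) − E f_i(Y_i))| ≥ ε) ≤ K exp(−κ |Γ| ε²)` for all `ε ∈ (0,1)`. -/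
theorem overlapping_gaussian_pl2_concentration
    (p : ℕ) (hp : p = 1 ∨ p = 2 ∨ p = 3) (k t : ℕ) (ht : 1 ≤ t)
    (L : ℝ) (hL : 0 < L) :
    ∃ K κ : ℝ, 0 < K ∧ 0 < κ ∧
      ∀ (N : ℕ), 0 < N → 2 * k + 1 ≤ N →
      ∀ R : Matrix (Fin t) (Fin t) ℝ, (∀ r, R r r = 1) → R.IsSymm → R.PosSemidef →
      ∀ ν : Measure (Fin t → ℝ), IsProbabilityMeasure ν →
      -- `ν` is the centered jointly Gaussian law on `ℝᵗ` with covariance `R`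
      (∀ a : Fin t → ℝ, Measure.map (fun y => ∑ r, a r * y r) ν =
        gaussianReal 0 (Real.toNNReal (∑ r, ∑ s, a r * a s * R r s))) →
      ∀ f : ∀ i : Idx p N,
        EuclideanSpace ℝ ({j : Win p k // (winIdx? p N k i j).isSome} × Fin t) → ℝ,
      (∀ i, ∀ x y : EuclideanSpace ℝ ({j : Win p k // (winIdx? p N k i j).isSome} × Fin t),
        |f i x - f i y| ≤ L * (1 + ‖x‖ + ‖y‖) * ‖x - y‖) →
      ∀ ε : ℝ, 0 < ε → ε < 1 →
        (Measure.pi fun _ : Idx p N => ν)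
          {z | ε ≤ |(Fintype.card (Idx p N) : ℝ)⁻¹ *
              ∑ i, (f i (WithLp.toLp 2 (winData p N k t z i)) -
                ∫ z', f i (WithLp.toLp 2 (winData p N k t z' i)) ∂(Measure.pi fun _ : Idx p N => ν))|}
          ≤ ENNReal.ofReal (K * Real.exp (-κ * (Fintype.card (Idx p N)) * ε ^ 2)) := by
  classical
  -- constants depending only on p, k, t, L
  set d : ℕ := (2*k+1)^p * t with hd_def
  have hd1 : 1 ≤ d := by
    have h1 : 1 ≤ (2*k+1)^p := Nat.one_le_pow _ _ (by omega)
    calc 1 = 1 * 1 := by norm_num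
      _ ≤ (2*k+1)^p * t := Nat.mul_le_mul h1 ht
  have hdR : (1:ℝ) ≤ (d:ℝ) := by exact_mod_cast hd1
  have hdR0 : (0:ℝ) < (d:ℝ) := by linarith
  set s0 : ℝ := 1/(4*(d:ℝ)) with hs0_def
  have hs0 : 0 < s0 := by positivity
  set aC : ℝ := 2*L + 2*L*Real.sqrt 2/s0 with haC_def
  have haC : 0 < aC := by positivity
  set cC : ℝ := 2*L with hcC_def
  have hcC : 0 < cC := by positivity
  set b : ℝ := 8*aC + 2*cC/s0 + 1 with hb_def
  have hb1 : 1 ≤ b := by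
    have h1 : 0 ≤ 8*aC := by positivity
    have h2 : 0 ≤ 2*cC/s0 := by positivity
    rw [hb_def]; linarith
  have hb0 : 0 < b := lt_of_lt_of_le one_pos hb1
  set Mn : ℕ := (2*k+1)^p with hMn_def
  have hMn1 : 1 ≤ Mn := Nat.one_le_pow _ _ (by omega)
  set MR : ℝ := (Mn : ℝ) with hMR_def
  have hMR1 : (1:ℝ) ≤ MR := by rw [hMR_def]; exact_mod_cast hMn1
  have hMR0 : 0 < MR := by linarith
  refine ⟨2*MR, 1/(32*b^2*MR^2), by positivity, by positivity, ?_⟩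
  intro N hN hkN R hRdiag hRsymm hRpsd ν hν hgauss f hPL ε hε0 hε1
  set μ : Measure (Idx p N → Fin t → ℝ) := Measure.pi fun _ => ν with hμ_def
  haveI hμprob : IsProbabilityMeasure μ := by rw [hμ_def]; infer_instance
  haveI : Nonempty (Idx p N) := ⟨fun _ => ⟨0, hN⟩⟩
  set n : ℝ := (Fintype.card (Idx p N) : ℝ) with hn_def
  have hn1 : (1:ℝ) ≤ n := by
    rw [hn_def]; exact_mod_cast Fintype.card_pos
  have hn0 : (0:ℝ) < n := by linarith
  -- coordinate marginals are standard gaussians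
  have hcoordν : ∀ r : Fin t, Measure.map (fun y : Fin t → ℝ => y r) ν = gaussianReal 0 1 := by
    intro r
    have h := hgauss (fun s => if s = r then 1 else 0)
    have hfun : (fun y : Fin t → ℝ => ∑ s, (if s = r then (1:ℝ) else 0) * y s)
        = fun y => y r := by
      funext y
      rw [Finset.sum_eq_single r (fun s _ hs => by rw [if_neg hs, zero_mul])
        (fun hr => absurd (Finset.mem_univ r) hr)]
      rw [if_pos rfl, one_mul]
    have hvar : (∑ r', ∑ s, (if r' = r then (1:ℝ) else 0) * (if s = r then (1:ℝ) else 0)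
        * R r' s) = 1 := by
      rw [Finset.sum_eq_single r
        (fun b' _ hb' => Finset.sum_eq_zero (fun s _ => by rw [if_neg hb']; ring))
        (fun hr => absurd (Finset.mem_univ r) hr)]
      rw [Finset.sum_eq_single r (fun s _ hs => by rw [if_neg hs]; ring)
        (fun hr => absurd (Finset.mem_univ r) hr)]
      simp [hRdiag r]
    rw [hfun, hvar] at h
    simpa using h
  have hmeasco : ∀ (i' : Idx p N) (r : Fin t),
      Measurable (fun z : Idx p N → Fin t → ℝ => z i' r) :=
    fun i' r => (measurable_pi_apply r).comp (measurable_pi_apply i')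
  have hcoordμ : ∀ (i' : Idx p N) (r : Fin t),
      Measure.map (fun z : Idx p N → Fin t → ℝ => z i' r) μ = gaussianReal 0 1 := by
    intro i' r
    have hcomp : (fun z : Idx p N → Fin t → ℝ => z i' r)
        = (fun y : Fin t → ℝ => y r) ∘ (fun z : Idx p N → Fin t → ℝ => z i') := rfl
    rw [hμ_def, hcomp, ← Measure.map_map (measurable_pi_apply r) (measurable_pi_apply i'),
      aux_map_eval_pi ν i', hcoordν r]
  have hexpco : ∀ (i' : Idx p N) (r : Fin t) (c : ℝ), 0 ≤ c → c ≤ 1/4 →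
      Integrable (fun z => Real.exp (c * (z i' r)^2)) μ ∧
        ∫ z, Real.exp (c * (z i' r)^2) ∂μ ≤ Real.sqrt 2 := by
    intro i' r c hc0 hc4
    obtain ⟨hInt, hI⟩ := aux_gauss_exp_sq hc0 hc4
    have hIg : Integrable (fun x : ℝ => Real.exp (c * x^2))
        (Measure.map (fun z : Idx p N → Fin t → ℝ => z i' r) μ) := by
      rw [hcoordμ i' r]; exact hInt
    constructor
    · exact (integrable_map_measure hIg.aestronglyMeasurable
        (hmeasco i' r).aemeasurable).mp hIg
    · calc ∫ z, Real.exp (c * (z i' r)^2) ∂μ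
          = ∫ x, Real.exp (c * x^2) ∂(Measure.map (fun z : Idx p N → Fin t → ℝ => z i' r) μ) :=
            (integral_map (hmeasco i' r).aemeasurable hIg.aestronglyMeasurable).symm
        _ ≤ Real.sqrt 2 := by rw [hcoordμ i' r]; exact hI
  -- window data machinery
  have hwd_meas : ∀ i : Idx p N,
      Measurable (fun z : Idx p N → Fin t → ℝ => winData p N k t z i) := by
    intro i
    apply measurable_pi_lambda
    intro jr
    exact hmeasco ((winIdx? p N k i jr.1.val).get jr.1.prop) jr.2
  set Wf : Idx p N → (Idx p N → Fin t → ℝ) → ℝ :=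
    fun i z => ∑ jr, (winData p N k t z i jr)^2 with hWf_def
  have hWf_meas : ∀ i, Measurable (Wf i) := by
    intro i
    apply Finset.measurable_sum
    intro jr _
    exact (hmeasco ((winIdx? p N k i jr.1.val).get jr.1.prop) jr.2).pow_const 2
  have hW_nonneg : ∀ i z, 0 ≤ Wf i z := by
    intro i z
    exact Finset.sum_nonneg (fun _ _ => sq_nonneg _)
  -- Jensen: exponential moments of Wf
  have hexpW : ∀ i : Idx p N, Integrable (fun z => Real.exp (s0 * Wf i z)) μ ∧
      ∫ z, Real.exp (s0 * Wf i z) ∂μ ≤ Real.sqrt 2 := by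
    intro i
    have hDled : Fintype.card ({j : Win p k // (winIdx? p N k i j).isSome} × Fin t) ≤ d := by
      rw [hd_def, hMn_def]
      calc Fintype.card ({j : Win p k // (winIdx? p N k i j).isSome} × Fin t)
          = Fintype.card {j : Win p k // (winIdx? p N k i j).isSome} * Fintype.card (Fin t) :=
            Fintype.card_prod _ _
        _ ≤ Fintype.card (Win p k) * t :=
            Nat.mul_le_mul (Fintype.card_subtype_le _) (le_of_eq (Fintype.card_fin t))
        _ = (2*k+1)^p * t := by rw [Fintype.card_fun, Fintype.card_fin, Fintype.card_fin]
    have hJne : Nonempty ({j : Win p k // (winIdx? p N k i j).isSome} × Fin t) := by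
      refine ⟨⟨⟨fun _ => ⟨k, by omega⟩, ?_⟩, ⟨0, ht⟩⟩⟩
      rw [winIdx?, dif_pos ?_]
      · rfl
      · intro c
        have h1 := (i c).isLt
        constructor
        · push_cast; omega
        · push_cast; omega
    have hD1 : 1 ≤ Fintype.card ({j : Win p k // (winIdx? p N k i j).isSome} × Fin t) :=
      Fintype.card_pos
    set D : ℕ := Fintype.card ({j : Win p k // (winIdx? p N k i j).isSome} × Fin t) with hD_def
    have hDR : (1:ℝ) ≤ (D:ℝ) := by exact_mod_cast hD1
    have hDR0 : (0:ℝ) < (D:ℝ) := by linarith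
    have hDd : (D:ℝ) ≤ (d:ℝ) := by exact_mod_cast hDled
    have hc4 : s0 * D ≤ 1/4 := by
      rw [hs0_def]
      calc 1/(4*(d:ℝ)) * D ≤ 1/(4*(d:ℝ)) * (d:ℝ) := by
            apply mul_le_mul_of_nonneg_left hDd (by positivity)
        _ = 1/4 := by field_simp
    have hc0 : 0 ≤ s0 * D := by positivity
    have hjensen : ∀ z, Real.exp (s0 * Wf i z)
        ≤ ∑ jr, (1/(D:ℝ)) * Real.exp (s0 * D * (winData p N k t z i jr)^2) := by
      intro z
      have hsum : s0 * Wf i z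
          = ∑ jr, (1/(D:ℝ)) • (s0 * D * (winData p N k t z i jr)^2) := by
        rw [hWf_def]
        simp only [smul_eq_mul]
        rw [Finset.mul_sum]
        apply Finset.sum_congr rfl
        intro jr _
        field_simp
      have hcx := (convexOn_exp).map_sum_le
        (t := (Finset.univ : Finset ({j : Win p k // (winIdx? p N k i j).isSome} × Fin t)))
        (w := fun _ => 1/(D:ℝ))
        (p := fun jr => s0 * D * (winData p N k t z i jr)^2)
        (fun _ _ => by positivity)
        (by rw [Finset.sum_const, Finset.card_univ, ← hD_def, nsmul_eq_mul]; field_simp)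
        (fun _ _ => Set.mem_univ _)
      rw [hsum]
      simpa [smul_eq_mul] using hcx
    have hint_total : Integrable
        (fun z => ∑ jr, (1/(D:ℝ)) * Real.exp (s0 * D * (winData p N k t z i jr)^2)) μ := by
      apply integrable_finset_sum
      intro jr _
      exact (hexpco ((winIdx? p N k i jr.1.val).get jr.1.prop) jr.2 (s0*D) hc0 hc4).1.const_mul _
    have hexpWmeas : Measurable (fun z => Real.exp (s0 * Wf i z)) :=
      ((hWf_meas i).const_mul s0).exp
    have hIntW : Integrable (fun z => Real.exp (s0 * Wf i z)) μ := by
      refine hint_total.mono' hexpWmeas.aestronglyMeasurable ?_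
      filter_upwards with z
      rw [Real.norm_eq_abs, abs_of_pos (Real.exp_pos _)]
      exact hjensen z
    refine ⟨hIntW, ?_⟩
    calc ∫ z, Real.exp (s0 * Wf i z) ∂μ
        ≤ ∫ z, (∑ jr, (1/(D:ℝ)) * Real.exp (s0 * D * (winData p N k t z i jr)^2)) ∂μ :=
          integral_mono hIntW hint_total hjensen
      _ = ∑ jr, (1/(D:ℝ)) * ∫ z, Real.exp (s0 * D * (winData p N k t z i jr)^2) ∂μ := by
          rw [integral_finset_sum _ (fun jr _ =>
            (hexpco ((winIdx? p N k i jr.1.val).get jr.1.prop) jr.2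
              (s0*D) hc0 hc4).1.const_mul _)]
          simp_rw [integral_const_mul]
      _ ≤ ∑ jr : ({j : Win p k // (winIdx? p N k i j).isSome} × Fin t),
            (1/(D:ℝ)) * Real.sqrt 2 := by
          apply Finset.sum_le_sum
          intro jr _
          apply mul_le_mul_of_nonneg_left
            (hexpco ((winIdx? p N k i jr.1.val).get jr.1.prop) jr.2 (s0*D) hc0 hc4).2
            (by positivity)
      _ = Real.sqrt 2 := by
          rw [Finset.sum_const, Finset.card_univ, ← hD_def, nsmul_eq_mul]
          field_simp
  -- W is integrable with bounded mean
  have hWint : ∀ i, Integrable (Wf i) μ ∧ ∫ z, Wf i z ∂μ ≤ Real.sqrt 2 / s0 := by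
    intro i
    obtain ⟨hI, hbd⟩ := hexpW i
    have hpt : ∀ z, Wf i z ≤ Real.exp (s0 * Wf i z) / s0 := by
      intro z
      rw [le_div_iff₀ hs0]
      have h := Real.add_one_le_exp (s0 * Wf i z)
      have h2 : 0 ≤ s0 * Wf i z := mul_nonneg hs0.le (hW_nonneg i z)
      nlinarith
    have hIW : Integrable (Wf i) μ := by
      refine (hI.div_const s0).mono' (hWf_meas i).aestronglyMeasurable ?_
      filter_upwards with z
      rw [Real.norm_eq_abs, abs_of_nonneg (hW_nonneg i z)]
      exact hpt z
    refine ⟨hIW, ?_⟩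
    calc ∫ z, Wf i z ∂μ ≤ ∫ z, Real.exp (s0 * Wf i z) / s0 ∂μ :=
          integral_mono hIW (hI.div_const s0) hpt
      _ = (∫ z, Real.exp (s0 * Wf i z) ∂μ) / s0 := integral_div s0 _
      _ ≤ Real.sqrt 2 / s0 := by gcongr
  -- continuity of the PL(2) functions
  have hfc : ∀ i, Continuous (f i) := by
    intro i
    rw [continuous_iff_continuousAt]
    intro x₀
    have hto : Filter.Tendsto (fun x => f i x - f i x₀) (nhds x₀) (nhds 0) := by
      have hcont : Continuous (fun x : EuclideanSpace ℝ
          ({j : Win p k // (winIdx? p N k i j).isSome} × Fin t)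
            => L * (1 + ‖x‖ + ‖x₀‖) * ‖x - x₀‖) := by
        apply Continuous.mul
        · apply Continuous.mul continuous_const
          exact (continuous_const.add continuous_norm).add continuous_const
        · exact (continuous_id.sub continuous_const).norm
      have hgl : Filter.Tendsto (fun x : EuclideanSpace ℝ
          ({j : Win p k // (winIdx? p N k i j).isSome} × Fin t)
            => L * (1 + ‖x‖ + ‖x₀‖) * ‖x - x₀‖) (nhds x₀) (nhds 0) := by
        have h := hcont.tendsto x₀
        simpa using h
      exact squeeze_zero_norm (fun x => by rw [Real.norm_eq_abs]; exact hPL i x x₀) hgl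
    have h2 : Filter.Tendsto (fun x => (f i x - f i x₀) + f i x₀) (nhds x₀)
        (nhds (0 + f i x₀)) := hto.add tendsto_const_nhds
    exact (by simpa using h2 : Filter.Tendsto (fun x => f i x) (nhds x₀) (nhds (f i x₀)))
  -- g, m, X
  set g : Idx p N → (Idx p N → Fin t → ℝ) → ℝ := fun i z => f i (WithLp.toLp 2 (winData p N k t z i))
    with hg_def
  have hg_meas : ∀ i, Measurable (g i) := fun i => (hfc i).measurable.comp ((WithLp.measurable_toLp 2 _).comp (hwd_meas i))
  have hgb : ∀ i z, |g i z - f i 0| ≤ L * (1 + 2 * Wf i z) := by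
    intro i z
    have h := hPL i (WithLp.toLp 2 (winData p N k t z i)) 0
    rw [norm_zero, sub_zero] at h
    set Y : EuclideanSpace ℝ ({j : Win p k // (winIdx? p N k i j).isSome} × Fin t) :=
      WithLp.toLp 2 (winData p N k t z i) with hY_def
    have hu0 : 0 ≤ ‖Y‖ := norm_nonneg _
    have hu2 : ‖Y‖^2 = Wf i z := by
      have husqrt : ‖Y‖ = Real.sqrt (Wf i z) := by
        rw [EuclideanSpace.norm_eq, hWf_def]
        simp only [hY_def]
        simp [Real.norm_eq_abs, sq_abs]
      rw [husqrt]
      exact Real.sq_sqrt (hW_nonneg i z)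
    have huu : ‖Y‖ + ‖Y‖^2 ≤ 1 + 2*‖Y‖^2 := by nlinarith [sq_nonneg (‖Y‖ - 1)]
    calc |g i z - f i 0| ≤ L * (1 + ‖Y‖ + 0) * ‖Y‖ := h
      _ = L * (‖Y‖ + ‖Y‖^2) := by ring
      _ ≤ L * (1 + 2*‖Y‖^2) := mul_le_mul_of_nonneg_left huu hL.le
      _ = L * (1 + 2 * Wf i z) := by rw [hu2]
  set m : Idx p N → ℝ := fun i => ∫ z, g i z ∂μ with hm_def
  have hg_int : ∀ i, Integrable (g i) μ := by
    intro i
    have hbint : Integrable (fun z => |f i 0| + L * (1 + 2 * Wf i z)) μ := by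
      apply Integrable.add (integrable_const _)
      exact ((integrable_const 1).add ((hWint i).1.const_mul 2)).const_mul L
    refine hbint.mono' (hg_meas i).aestronglyMeasurable ?_
    filter_upwards with z
    rw [Real.norm_eq_abs]
    have h1 := hgb i z
    have h2 := abs_sub_abs_le_abs_sub (g i z) (f i 0)
    linarith
  have hm_diff : ∀ i, |m i - f i 0| ≤ L * (1 + 2 * (Real.sqrt 2 / s0)) := by
    intro i
    have h1 : m i - f i 0 = ∫ z, (g i z - f i 0) ∂μ := by
      rw [hm_def, integral_sub (hg_int i) (integrable_const _), integral_const]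
      simp
    rw [h1]
    have h2 : |∫ z, (g i z - f i 0) ∂μ| ≤ ∫ z, |g i z - f i 0| ∂μ := by
      simpa [Real.norm_eq_abs] using
        norm_integral_le_integral_norm (μ := μ) (fun z => g i z - f i 0)
    refine h2.trans ?_
    have hint1 : Integrable (fun z => (1:ℝ) + 2 * Wf i z) μ :=
      (integrable_const 1).add ((hWint i).1.const_mul 2)
    have h3 : ∫ z, |g i z - f i 0| ∂μ ≤ ∫ z, L * (1 + 2 * Wf i z) ∂μ :=
      integral_mono ((hg_int i).sub (integrable_const _)).abs (hint1.const_mul L)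
        (fun z => hgb i z)
    refine h3.trans ?_
    rw [integral_const_mul, integral_add (integrable_const 1) ((hWint i).1.const_mul 2),
      integral_const, integral_const_mul]
    simp only [measure_univ, probReal_univ, ENNReal.toReal_one, smul_eq_mul, one_mul]
    have h4 := (hWint i).2
    have h5 : (1:ℝ) + 2 * ∫ z, Wf i z ∂μ ≤ 1 + 2 * (Real.sqrt 2 / s0) := by linarith
    exact mul_le_mul_of_nonneg_left h5 hL.le
  set X : Idx p N → (Idx p N → Fin t → ℝ) → ℝ := fun i z => g i z - m i with hX_def
  have hX_meas : ∀ i, Measurable (X i) := fun i => (hg_meas i).sub measurable_const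
  have hX_int : ∀ i, Integrable (X i) μ := fun i => (hg_int i).sub (integrable_const _)
  have hX_cent : ∀ i, ∫ z, X i z ∂μ = 0 := by
    intro i
    rw [hX_def]
    simp only
    rw [integral_sub (hg_int i) (integrable_const _), integral_const]
    simp [hm_def]
  have hX_abs : ∀ i z, |X i z| ≤ aC + cC * Wf i z := by
    intro i z
    have h1 := hgb i z
    have h2 := hm_diff i
    have h3 : |X i z| ≤ |g i z - f i 0| + |m i - f i 0| := by
      rw [hX_def]
      calc |g i z - m i| = |(g i z - f i 0) - (m i - f i 0)| := by ring_nf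
        _ ≤ |g i z - f i 0| + |m i - f i 0| := abs_sub _ _
    have h4 : L * (1 + 2*Wf i z) + L * (1 + 2*(Real.sqrt 2/s0))
        = (2*L + 2*L*Real.sqrt 2/s0) + 2*L*Wf i z := by ring
    have e1 : aC = 2*L + 2*L*Real.sqrt 2/s0 := by rw [haC_def, hcC_def]
    rw [e1, hcC_def]
    linarith
  -- mgf bounds for each site
  have hmgf : ∀ (i : Idx p N) (l : ℝ), |l| ≤ 1/b →
      Integrable (fun z => Real.exp (l * X i z)) μ ∧
        ∫ z, Real.exp (l * X i z) ∂μ ≤ Real.exp (8*b^2*l^2) := by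
    intro i l hl
    have hXexp : Integrable (fun z => Real.exp (2*|X i z|/b)) μ ∧
        ∫ z, Real.exp (2*|X i z|/b) ∂μ ≤ 2 := by
      have hpt : ∀ z, Real.exp (2*|X i z|/b) ≤ Real.sqrt 2 * Real.exp (s0 * Wf i z) := by
        intro z
        have hb8 : 8*aC ≤ b := by
          rw [hb_def]
          have h0 : 0 ≤ 2*cC/s0 := by positivity
          linarith
        have h1 : 2*aC/b ≤ 1/4 := by
          rw [div_le_iff₀ hb0, hb_def]
          have h0 : 0 ≤ 2*cC/s0 := by positivity
          nlinarith [haC.le]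
        have hsb : s0 * b = 8*s0*aC + 2*cC + s0 := by
          rw [hb_def]; field_simp
        have h2 : 2*cC/b ≤ s0 := by
          rw [div_le_iff₀ hb0]
          nlinarith [mul_pos hs0 haC, hs0]
        have habs := hX_abs i z
        have hW0 := hW_nonneg i z
        have hle : 2*|X i z|/b ≤ 1/4 + s0 * Wf i z := by
          have e1 : 2*|X i z|/b ≤ 2*(aC + cC * Wf i z)/b := by
            gcongr
          have e2 : 2*(aC + cC*Wf i z)/b = 2*aC/b + (2*cC/b) * Wf i z := by
            field_simp
          have e3 : (2*cC/b) * Wf i z ≤ s0 * Wf i z := mul_le_mul_of_nonneg_right h2 hW0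
          rw [e2] at e1
          linarith
        calc Real.exp (2*|X i z|/b) ≤ Real.exp (1/4 + s0*Wf i z) := Real.exp_le_exp.mpr hle
          _ = Real.exp (1/4) * Real.exp (s0*Wf i z) := Real.exp_add _ _
          _ ≤ Real.sqrt 2 * Real.exp (s0*Wf i z) :=
              mul_le_mul_of_nonneg_right aux_exp_quarter (Real.exp_pos _).le
      have hmeas2 : Measurable (fun z => Real.exp (2*|X i z|/b)) :=
        (((hX_meas i).abs.const_mul 2).div_const b).exp
      have hint2 : Integrable (fun z => Real.exp (2*|X i z|/b)) μ := by
        refine ((hexpW i).1.const_mul (Real.sqrt 2)).mono' hmeas2.aestronglyMeasurable ?_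
        filter_upwards with z
        rw [Real.norm_eq_abs, abs_of_pos (Real.exp_pos _)]
        exact hpt z
      refine ⟨hint2, ?_⟩
      calc ∫ z, Real.exp (2*|X i z|/b) ∂μ
          ≤ ∫ z, Real.sqrt 2 * Real.exp (s0*Wf i z) ∂μ :=
            integral_mono hint2 ((hexpW i).1.const_mul _) hpt
        _ = Real.sqrt 2 * ∫ z, Real.exp (s0*Wf i z) ∂μ := integral_const_mul _ _
        _ ≤ Real.sqrt 2 * Real.sqrt 2 :=
            mul_le_mul_of_nonneg_left (hexpW i).2 (Real.sqrt_nonneg 2)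
        _ = 2 := Real.mul_self_sqrt (by norm_num)
    exact aux_mgf_le (hX_meas i) hb1 hXexp.1 hXexp.2 (hX_int i) (hX_cent i) hl
  -- X factors through the window
  have hXcomp : ∀ i : Idx p N,
      ∃ F : ((winSet p N k i) → (Fin t → ℝ)) → ℝ,
        Measurable F ∧ ∀ z, X i z = F (resSet (winSet p N k i) z) := by
    intro i
    have hinner : Measurable (fun w : (winSet p N k i) → (Fin t → ℝ) =>
        (fun jr : {j : Win p k // (winIdx? p N k i j).isSome} × Fin t =>
          w ⟨(winIdx? p N k i jr.1.val).get jr.1.prop, ⟨jr.1, rfl⟩⟩ jr.2)) := by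
      apply measurable_pi_lambda
      intro jr
      exact (measurable_pi_apply jr.2).comp (measurable_pi_apply _)
    refine ⟨fun w => f i (WithLp.toLp 2 (fun jr => w ⟨(winIdx? p N k i jr.1.val).get jr.1.prop,
      ⟨jr.1, rfl⟩⟩ jr.2)) - m i, ((hfc i).measurable.comp ((WithLp.measurable_toLp 2 _).comp hinner)).sub measurable_const, ?_⟩
    intro z
    rfl
  -- residue classes
  have h2k1 : 0 < 2*k+1 := by omega
  set φ : Idx p N → Win p k :=
    fun i c => (⟨(i c : ℕ) % (2*k+1), Nat.mod_lt _ h2k1⟩ : Fin (2*k+1)) with hφ_def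
  have hcardWin : Fintype.card (Win p k) = Mn := by
    rw [hMn_def, Fintype.card_fun, Fintype.card_fin, Fintype.card_fin]
  -- the generic per-class Chernoff bound
  have chern : ∀ (q : Win p k) (Y : ∀ _ : Idx p N, (Idx p N → Fin t → ℝ) → ℝ),
      (∀ i, Measurable (Y i)) →
      (∀ i, ∃ F : ((winSet p N k i) → (Fin t → ℝ)) → ℝ, Measurable F ∧
        ∀ z, Y i z = F (resSet (winSet p N k i) z)) →
      (∀ i (l : ℝ), |l| ≤ 1/b → Integrable (fun z => Real.exp (l * Y i z)) μ ∧
        ∫ z, Real.exp (l * Y i z) ∂μ ≤ Real.exp (8*b^2*l^2)) →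
      μ {z | n * ε / MR ≤ ∑ i : {i : Idx p N // φ i = q}, Y i.val z}
        ≤ ENNReal.ofReal (Real.exp (-(1/(32*b^2*MR^2)) * n * ε^2)) := by
    intro q Y hYmeas hYcomp hYmgf
    choose F hFmeas hFeq using hYcomp
    have hdisj : Pairwise (Function.onFun Disjoint (fun i : {i : Idx p N // φ i = q} =>
        winSet p N k i.val)) := by
      intro i i' hne
      apply winSet_disjoint
      · intro c
        have h1 : φ i.val c = φ i'.val c := by rw [i.prop, i'.prop]
        exact congrArg Fin.val h1
      · intro hEq; exact hne (Subtype.ext hEq)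
    have hind0 := iIndepFun_resSet (A := Idx p N) ν (0 : Fin t → ℝ)
      (fun i : {i : Idx p N // φ i = q} => winSet p N k i.val) hdisj
    have hind : iIndepFun (fun (i : {i : Idx p N // φ i = q}) => Y i.val) μ := by
      have hcomp := hind0.comp (fun i : {i : Idx p N // φ i = q} => F i.val)
        (fun i => hFmeas i.val)
      have heq : (fun i : {i : Idx p N // φ i = q} =>
          (F i.val) ∘ (resSet (winSet p N k i.val))) = fun i => Y i.val := by
        funext i
        funext z
        exact (hFeq i.val z).symm
      rw [hμ_def, ← heq]
      exact hcomp
    set lq : ℝ := ε/(16*b^2*MR) with hlq_def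
    have hlq0 : 0 ≤ lq := by positivity
    have hlqb : |lq| ≤ 1/b := by
      rw [abs_of_nonneg hlq0, hlq_def, div_le_div_iff₀ (by positivity) hb0]
      nlinarith [hb1, hMR1, hε1.le, hε0.le, hb0]
    have hintsum : Integrable (fun z => Real.exp (lq *
        (∑ i : {i : Idx p N // φ i = q}, Y i.val) z)) μ :=
      hind.integrable_exp_mul_sum (fun i => hYmeas i.val)
        (fun i _ => (hYmgf i.val lq hlqb).1)
    have hcher := measure_ge_le_exp_mul_mgf (μ := μ)
      (X := ∑ i : {i : Idx p N // φ i = q}, Y i.val) (n*ε/MR) hlq0 hintsum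
    have hmgfsum : mgf (∑ i : {i : Idx p N // φ i = q}, Y i.val) μ lq
        = ∏ i : {i : Idx p N // φ i = q}, mgf (Y i.val) μ lq :=
      hind.mgf_sum (fun i => hYmeas i.val) Finset.univ
    have hcard : Fintype.card {i : Idx p N // φ i = q} ≤ Fintype.card (Idx p N) :=
      Fintype.card_subtype_le _
    have hmgfle : mgf (∑ i : {i : Idx p N // φ i = q}, Y i.val) μ lq
        ≤ Real.exp (8*b^2*lq^2 * n) := by
      rw [hmgfsum]
      calc ∏ i : {i : Idx p N // φ i = q}, mgf (Y i.val) μ lq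
          ≤ ∏ _i : {i : Idx p N // φ i = q}, Real.exp (8*b^2*lq^2) := by
            apply Finset.prod_le_prod
            · intro i _; exact mgf_nonneg
            · intro i _; exact (hYmgf i.val lq hlqb).2
        _ = Real.exp (8*b^2*lq^2) ^ (Fintype.card {i : Idx p N // φ i = q}) := by
            rw [Finset.prod_const, Finset.card_univ]
        _ = Real.exp ((Fintype.card {i : Idx p N // φ i = q} : ℕ) * (8*b^2*lq^2)) := by
            rw [Real.exp_nat_mul]
        _ ≤ Real.exp (8*b^2*lq^2 * n) := by
            apply Real.exp_le_exp.mpr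
            have hcn : ((Fintype.card {i : Idx p N // φ i = q} : ℕ) : ℝ) ≤ n := by
              rw [hn_def]; exact_mod_cast hcard
            have hBnn : (0:ℝ) ≤ 8*b^2*lq^2 := by positivity
            nlinarith
    have hfinal : Real.exp (-lq * (n*ε/MR)) * Real.exp (8*b^2*lq^2*n)
        = Real.exp (-(1/(32*b^2*MR^2)) * n * ε^2) := by
      rw [← Real.exp_add]
      congr 1
      rw [hlq_def]
      have hb' : b ≠ 0 := ne_of_gt hb0
      have hMR' : MR ≠ 0 := ne_of_gt hMR0
      field_simp
      ring
    have hchain : (μ {z | n*ε/MR ≤ (∑ i : {i : Idx p N // φ i = q}, Y i.val) z}).toReal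
        ≤ Real.exp (-(1/(32*b^2*MR^2)) * n * ε^2) := by
      calc (μ {z | n*ε/MR ≤ (∑ i : {i : Idx p N // φ i = q}, Y i.val) z}).toReal
          ≤ Real.exp (-lq * (n*ε/MR)) * mgf (∑ i : {i : Idx p N // φ i = q}, Y i.val) μ lq :=
            hcher
        _ ≤ Real.exp (-lq * (n*ε/MR)) * Real.exp (8*b^2*lq^2*n) :=
            mul_le_mul_of_nonneg_left hmgfle (Real.exp_pos _).le
        _ = _ := hfinal
    have hsetEq : {z | n * ε / MR ≤ ∑ i : {i : Idx p N // φ i = q}, Y i.val z}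
        = {z | n*ε/MR ≤ (∑ i : {i : Idx p N // φ i = q}, Y i.val) z} := by
      ext z; simp [Finset.sum_apply]
    rw [hsetEq, ENNReal.le_ofReal_iff_toReal_le (measure_ne_top μ _) (Real.exp_pos _).le]
    exact hchain
  -- the negated family
  set Xm : ∀ _ : Idx p N, (Idx p N → Fin t → ℝ) → ℝ := fun i z => -(X i z) with hXm_def
  have hXm_meas : ∀ i, Measurable (Xm i) := fun i => (hX_meas i).neg
  have hXm_comp : ∀ i, ∃ F : ((winSet p N k i) → (Fin t → ℝ)) → ℝ, Measurable F ∧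
      ∀ z, Xm i z = F (resSet (winSet p N k i) z) := by
    intro i
    obtain ⟨F, hF, hFe⟩ := hXcomp i
    exact ⟨fun w => -(F w), hF.neg, fun z => by rw [hXm_def]; simp [hFe z]⟩
  have hXm_mgf : ∀ i (l : ℝ), |l| ≤ 1/b →
      Integrable (fun z => Real.exp (l * Xm i z)) μ ∧
        ∫ z, Real.exp (l * Xm i z) ∂μ ≤ Real.exp (8*b^2*l^2) := by
    intro i l hl
    have h := hmgf i (-l) (by rwa [abs_neg])
    have he : (fun z => Real.exp (l * Xm i z)) = fun z => Real.exp ((-l) * X i z) := by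
      funext z
      rw [hXm_def]
      ring_nf
    constructor
    · rw [he]; exact h.1
    · rw [he]
      have h2 := h.2
      have h3 : (8*b^2*(-l)^2 : ℝ) = 8*b^2*l^2 := by ring
      rw [h3] at h2
      exact h2
  -- partition of the total sum into classes
  have hsplitsum : ∀ z, ∑ i, X i z
      = ∑ q : Win p k, ∑ i : {i : Idx p N // φ i = q}, X i.val z := by
    intro z
    rw [← Finset.sum_fiberwise Finset.univ φ (fun i => X i z)]
    apply Finset.sum_congr rfl
    intro q _
    exact Finset.sum_subtype (Finset.univ.filter (fun i => φ i = q))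
      (fun i => by simp) (fun i => X i z)
  -- inclusion of the deviation event in the union of class events
  have hincl : {z | ε ≤ |n⁻¹ * ∑ i, X i z|} ⊆
      ⋃ q : Win p k, ({z | n * ε / MR ≤ ∑ i : {i : Idx p N // φ i = q}, X i.val z}
        ∪ {z | n * ε / MR ≤ ∑ i : {i : Idx p N // φ i = q}, Xm i.val z}) := by
    intro z hz
    simp only [Set.mem_setOf_eq] at hz
    by_contra hcon
    simp only [Set.mem_iUnion, Set.mem_union, Set.mem_setOf_eq, not_exists, not_or,
      not_le] at hcon
    have habs : ∀ q : Win p k, |∑ i : {i : Idx p N // φ i = q}, X i.val z| < n*ε/MR := by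
      intro q
      obtain ⟨h1, h2⟩ := hcon q
      rw [abs_lt]
      refine ⟨?_, h1⟩
      have hneg : ∑ i : {i : Idx p N // φ i = q}, Xm i.val z
          = - ∑ i : {i : Idx p N // φ i = q}, X i.val z := by
        rw [hXm_def]
        simp
      rw [hneg] at h2
      linarith
    have hWinNe : (Finset.univ : Finset (Win p k)).Nonempty := Finset.univ_nonempty
    have htot : |∑ i, X i z| < MR * (n*ε/MR) := by
      rw [hsplitsum z]
      calc |∑ q : Win p k, ∑ i : {i : Idx p N // φ i = q}, X i.val z|
          ≤ ∑ q : Win p k, |∑ i : {i : Idx p N // φ i = q}, X i.val z| :=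
            Finset.abs_sum_le_sum_abs _ _
        _ < ∑ _q : Win p k, n*ε/MR := Finset.sum_lt_sum_of_nonempty hWinNe (fun q _ => habs q)
        _ = MR * (n*ε/MR) := by
            rw [Finset.sum_const, Finset.card_univ, hcardWin, nsmul_eq_mul, hMR_def]
    have hMReq : MR * (n*ε/MR) = n*ε := by field_simp
    have hzz : n * ε ≤ |∑ i, X i z| := by
      have h0 : |n⁻¹ * ∑ i, X i z| = n⁻¹ * |∑ i, X i z| := by
        rw [abs_mul, abs_of_pos (by positivity : (0:ℝ) < n⁻¹)]
      rw [h0] at hz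
      calc n * ε ≤ n * (n⁻¹ * |∑ i, X i z|) := mul_le_mul_of_nonneg_left hz hn0.le
        _ = |∑ i, X i z| := by field_simp
    rw [hMReq] at htot
    linarith
  -- final assembly
  have hgoalset : {z | ε ≤ |(Fintype.card (Idx p N) : ℝ)⁻¹ *
      ∑ i, (f i (WithLp.toLp 2 (winData p N k t z i)) - ∫ z', f i (WithLp.toLp 2 (winData p N k t z' i)) ∂μ)|}
      = {z | ε ≤ |n⁻¹ * ∑ i, X i z|} := rfl
  calc μ {z | ε ≤ |(Fintype.card (Idx p N) : ℝ)⁻¹ *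
      ∑ i, (f i (WithLp.toLp 2 (winData p N k t z i)) - ∫ z', f i (WithLp.toLp 2 (winData p N k t z' i)) ∂μ)|}
      = μ {z | ε ≤ |n⁻¹ * ∑ i, X i z|} := by rw [hgoalset]
    _ ≤ μ (⋃ q : Win p k, ({z | n * ε / MR ≤ ∑ i : {i : Idx p N // φ i = q}, X i.val z}
        ∪ {z | n * ε / MR ≤ ∑ i : {i : Idx p N // φ i = q}, Xm i.val z})) :=
        measure_mono hincl
    _ ≤ ∑' q : Win p k, μ ({z | n * ε / MR ≤ ∑ i : {i : Idx p N // φ i = q}, X i.val z}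
        ∪ {z | n * ε / MR ≤ ∑ i : {i : Idx p N // φ i = q}, Xm i.val z}) :=
        measure_iUnion_le _
    _ = ∑ q : Win p k, μ ({z | n * ε / MR ≤ ∑ i : {i : Idx p N // φ i = q}, X i.val z}
        ∪ {z | n * ε / MR ≤ ∑ i : {i : Idx p N // φ i = q}, Xm i.val z}) := tsum_fintype _
    _ ≤ ∑ _q : Win p k, (ENNReal.ofReal (Real.exp (-(1/(32*b^2*MR^2)) * n * ε^2))
        + ENNReal.ofReal (Real.exp (-(1/(32*b^2*MR^2)) * n * ε^2))) := by
        apply Finset.sum_le_sum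
        intro q _
        calc μ ({z | n * ε / MR ≤ ∑ i : {i : Idx p N // φ i = q}, X i.val z}
            ∪ {z | n * ε / MR ≤ ∑ i : {i : Idx p N // φ i = q}, Xm i.val z})
            ≤ μ {z | n * ε / MR ≤ ∑ i : {i : Idx p N // φ i = q}, X i.val z}
              + μ {z | n * ε / MR ≤ ∑ i : {i : Idx p N // φ i = q}, Xm i.val z} :=
              measure_union_le _ _
          _ ≤ _ := add_le_add (chern q X hX_meas hXcomp hmgf)
              (chern q Xm hXm_meas hXm_comp hXm_mgf)
    _ = ENNReal.ofReal (2*MR * Real.exp (-(1/(32*b^2*MR^2)) * n * ε^2)) := by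
        rw [Finset.sum_const, Finset.card_univ, hcardWin, nsmul_eq_mul]
        rw [← ENNReal.ofReal_add (Real.exp_pos _).le (Real.exp_pos _).le]
        rw [← ENNReal.ofReal_natCast Mn, ← ENNReal.ofReal_mul (Nat.cast_nonneg Mn)]
        congr 1
        rw [hMR_def]
        ring

end
end
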